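/- Let Δ be a real number with 0 < Δ < 1/12, and set θ₊ = (7 + 2Δ + √(25 + 4Δ + 4Δ²))/3 and θ₋ = (7 + 2Δ − √(25 + 4Δ + 4Δ²))/3. Put φ₀ = 1/6 and φ₁ = 1/3. For each integer n ≥ 0 and each tuple m = (m₁,…,m_n) ∈ {0,1}^n define real numbers ã_r(m), b̃_r(m) (0 ≤ r ≤ n) by ã₀ = 1/(1 + 2Δ/3), b̃₀ = 1, and, for 1 ≤ r ≤ n, ã_r = b̃_{r−1} and b̃_r = 3 b̃_{r−1} when m_r = 0, while b̃_r = 2 b̃_{r−1} − ã_{r−1} + Δ(b̃_{r−1} − ã_{r−1}) when m_r = 1. Put B_n = Σ_{m ∈ {0,1}^n} φ_{m₁} φ_{m₂} ⋯ φ_{m_n} b̃_n(m). Then for every integer n ≥ 1 one has 4^n B_n = (θ₊^{n+1} − θ₋^{n+1})/(θ₊ − θ₋) − (θ₊θ₋/(2(1 + 2Δ/3))) · (θ₊^n − θ₋^n)/(θ₊ − θ₋). -/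

import Mathlib

open scoped BigOperators

/-- The pair `(ã_r(m), b̃_r(m))` of Wooley's multigrade iteration: `ã₀ = 1/(1 + 2Δ/3)`,
`b̃₀ = 1`, and for `r ≥ 1`, `ã_r = b̃_{r-1}` and `b̃_r = 3b̃_{r-1}` when `m_r = 0`
(here encoded as `m (r-1) = false`), while
`b̃_r = 2b̃_{r-1} - ã_{r-1} + Δ(b̃_{r-1} - ã_{r-1})` when `m_r = 1`
(encoded as `m (r-1) = true`). -/
noncomputable def seqAB (Δ : ℝ) (m : ℕ → Bool) : ℕ → ℝ × ℝ
  | 0 => (1 / (1 + 2 * Δ / 3), 1)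
  | r + 1 =>
    ((seqAB Δ m r).2,
      if m r then
        2 * (seqAB Δ m r).2 - (seqAB Δ m r).1 + Δ * ((seqAB Δ m r).2 - (seqAB Δ m r).1)
      else 3 * (seqAB Δ m r).2)

/-- `B_n = Σ_{m ∈ {0,1}^n} φ_{m₁} ⋯ φ_{m_n} b̃_n(m)`, where `φ₀ = 1/6` and `φ₁ = 1/3`;
a tuple `m ∈ {0,1}^n` is encoded as `m : Fin n → Bool` with `true` standing for `1`. -/
noncomputable def Bseq (Δ : ℝ) (n : ℕ) : ℝ :=
  ∑ m : Fin n → Bool,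
    (∏ i, if m i then (1 / 3 : ℝ) else 1 / 6) *
      (seqAB Δ (fun r => if h : r < n then m ⟨r, h⟩ else false) n).2

lemma seqAB_congr (Δ : ℝ) (m m' : ℕ → Bool) :
    ∀ r, (∀ i, i < r → m i = m' i) → seqAB Δ m r = seqAB Δ m' r
  | 0, _ => rfl
  | r + 1, h => by
    have ih := seqAB_congr Δ m m' r (fun i hi => h i (Nat.lt_succ_of_lt hi))
    simp [seqAB, ih, h r (Nat.lt_succ_self r)]

noncomputable def Aseq (Δ : ℝ) (n : ℕ) : ℝ :=
  ∑ m : Fin n → Bool,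
    (∏ i, if m i then (1 / 3 : ℝ) else 1 / 6) *
      (seqAB Δ (fun r => if h : r < n then m ⟨r, h⟩ else false) n).1

lemma Bseq_zero (Δ : ℝ) : Bseq Δ 0 = 1 := by
  simp [Bseq, seqAB]

lemma Aseq_zero (Δ : ℝ) : Aseq Δ 0 = 1 / (1 + 2 * Δ / 3) := by
  simp [Aseq, seqAB]

lemma snoc_ext (Δ : ℝ) (n : ℕ) (m : Fin n → Bool) (b : Bool) :
    seqAB Δ (fun r => if h : r < n + 1 then (Fin.snoc m b : Fin (n+1) → Bool) ⟨r, h⟩ else false) (n + 1) =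
      ((seqAB Δ (fun r => if h : r < n then m ⟨r, h⟩ else false) n).2,
        if b then
          2 * (seqAB Δ (fun r => if h : r < n then m ⟨r, h⟩ else false) n).2 -
              (seqAB Δ (fun r => if h : r < n then m ⟨r, h⟩ else false) n).1 +
            Δ * ((seqAB Δ (fun r => if h : r < n then m ⟨r, h⟩ else false) n).2 -
              (seqAB Δ (fun r => if h : r < n then m ⟨r, h⟩ else false) n).1)
        else 3 * (seqAB Δ (fun r => if h : r < n then m ⟨r, h⟩ else false) n).2) := by
  have hcongr : seqAB Δ (fun r => if h : r < n + 1 then (Fin.snoc m b : Fin (n+1) → Bool) ⟨r, h⟩ else false) n =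
      seqAB Δ (fun r => if h : r < n then m ⟨r, h⟩ else false) n := by
    apply seqAB_congr
    intro i hi
    have h1 : i < n + 1 := Nat.lt_succ_of_lt hi
    simp only [dif_pos h1, dif_pos hi]
    have : (⟨i, h1⟩ : Fin (n + 1)) = Fin.castSucc ⟨i, hi⟩ := rfl
    rw [this, Fin.snoc_castSucc]
  have hlast : (if h : n < n + 1 then (Fin.snoc m b : Fin (n+1) → Bool) ⟨n, h⟩ else false) = b := by
    simp only [dif_pos (Nat.lt_succ_self n)]
    have : (⟨n, Nat.lt_succ_self n⟩ : Fin (n + 1)) = Fin.last n := rfl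
    rw [this, Fin.snoc_last]
  simp only [seqAB]
  rw [hcongr]; simp only [hlast]

lemma sum_succ_split (Δ : ℝ) (n : ℕ) (F : ℝ × ℝ → ℝ) :
    (∑ m : Fin (n + 1) → Bool,
      (∏ i, if m i then (1 / 3 : ℝ) else 1 / 6) *
        F (seqAB Δ (fun r => if h : r < n + 1 then m ⟨r, h⟩ else false) (n + 1))) =
    ∑ m : Fin n → Bool,
      (∏ i, if m i then (1 / 3 : ℝ) else 1 / 6) *
        ((1 / 3) * F (seqAB Δ (fun r => if h : r < n + 1 then (Fin.snoc m true : Fin (n+1) → Bool) ⟨r, h⟩ else false) (n + 1)) +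
         (1 / 6) * F (seqAB Δ (fun r => if h : r < n + 1 then (Fin.snoc m false : Fin (n+1) → Bool) ⟨r, h⟩ else false) (n + 1))) := by
  rw [← Equiv.sum_comp (Fin.snocEquiv (fun _ => Bool))]
  rw [Fintype.sum_prod_type_right]
  apply Finset.sum_congr rfl
  intro m _
  rw [Fintype.sum_bool]
  have hprod : ∀ b : Bool, (∏ i : Fin (n + 1),
      if Fin.snocEquiv (fun _ => Bool) (b, m) i then (1 / 3 : ℝ) else 1 / 6) =
      (∏ i : Fin n, if m i then (1 / 3 : ℝ) else 1 / 6) *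
        (if b then (1 / 3 : ℝ) else 1 / 6) := by
    intro b
    rw [Fin.prod_univ_castSucc]
    congr 1
    · apply Finset.prod_congr rfl; intro i _; simp [Fin.snocEquiv]
    · simp [Fin.snocEquiv]
  have hseq : ∀ b : Bool, Fin.snocEquiv (fun _ => Bool) (b, m) = Fin.snoc m b := by
    intro b; rfl
  rw [hprod, hprod, hseq, hseq]
  norm_num
  ring

lemma Aseq_succ (Δ : ℝ) (n : ℕ) : Aseq Δ (n + 1) = (1 / 2) * Bseq Δ n := by
  rw [Aseq, sum_succ_split Δ n Prod.fst, Bseq, Finset.mul_sum]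
  apply Finset.sum_congr rfl
  intro m _
  rw [snoc_ext, snoc_ext]
  simp only []
  ring

lemma Bseq_succ (Δ : ℝ) (n : ℕ) :
    Bseq Δ (n + 1) = (1 / 2 + (2 + Δ) / 3) * Bseq Δ n - ((1 + Δ) / 3) * Aseq Δ n := by
  rw [Bseq, sum_succ_split Δ n Prod.snd, Bseq, Aseq, Finset.mul_sum, Finset.mul_sum,
    ← Finset.sum_sub_distrib]
  apply Finset.sum_congr rfl
  intro m _
  rw [snoc_ext, snoc_ext]
  simp only [if_true, if_false, Bool.false_eq_true]
  ring

/-- The closed form for `B_n`: with `θ± = (7 + 2Δ ± √(25 + 4Δ + 4Δ²))/3`, for every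
`n ≥ 1` one has
`4ⁿ Bₙ = (θ₊^{n+1} - θ₋^{n+1})/(θ₊ - θ₋) - (θ₊θ₋/(2(1 + 2Δ/3)))·(θ₊ⁿ - θ₋ⁿ)/(θ₊ - θ₋)`. -/
theorem Bseq_closed_form (Δ : ℝ) (hΔ0 : 0 < Δ) (hΔ : Δ < 1 / 12) (n : ℕ) (hn : 1 ≤ n) :
    (4 : ℝ) ^ n * Bseq Δ n =
      ((7 + 2 * Δ + Real.sqrt (25 + 4 * Δ + 4 * Δ ^ 2)) / 3) ^ (n + 1) /
          (((7 + 2 * Δ + Real.sqrt (25 + 4 * Δ + 4 * Δ ^ 2)) / 3) -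
            ((7 + 2 * Δ - Real.sqrt (25 + 4 * Δ + 4 * Δ ^ 2)) / 3)) -
        ((7 + 2 * Δ - Real.sqrt (25 + 4 * Δ + 4 * Δ ^ 2)) / 3) ^ (n + 1) /
          (((7 + 2 * Δ + Real.sqrt (25 + 4 * Δ + 4 * Δ ^ 2)) / 3) -
            ((7 + 2 * Δ - Real.sqrt (25 + 4 * Δ + 4 * Δ ^ 2)) / 3)) -
        (((7 + 2 * Δ + Real.sqrt (25 + 4 * Δ + 4 * Δ ^ 2)) / 3) *
            ((7 + 2 * Δ - Real.sqrt (25 + 4 * Δ + 4 * Δ ^ 2)) / 3) /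
              (2 * (1 + 2 * Δ / 3))) *
          ((((7 + 2 * Δ + Real.sqrt (25 + 4 * Δ + 4 * Δ ^ 2)) / 3) ^ n -
              ((7 + 2 * Δ - Real.sqrt (25 + 4 * Δ + 4 * Δ ^ 2)) / 3) ^ n) /
            (((7 + 2 * Δ + Real.sqrt (25 + 4 * Δ + 4 * Δ ^ 2)) / 3) -
              ((7 + 2 * Δ - Real.sqrt (25 + 4 * Δ + 4 * Δ ^ 2)) / 3))) := by
  have harg : (0:ℝ) < 25 + 4 * Δ + 4 * Δ ^ 2 := by nlinarith
  set s := Real.sqrt (25 + 4 * Δ + 4 * Δ ^ 2) with hs_def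
  have hs2 : s ^ 2 = 25 + 4 * Δ + 4 * Δ ^ 2 := Real.sq_sqrt harg.le
  have hspos : 0 < s := Real.sqrt_pos.mpr harg
  set tp := (7 + 2 * Δ + s) / 3 with htp
  set tm := (7 + 2 * Δ - s) / 3 with htm
  have hdne : tp - tm ≠ 0 := by
    rw [htp, htm]
    intro h
    have : s = 0 := by linarith [sub_eq_zero.mp h]
    exact hspos.ne' this
  have hD : (1 + 2 * Δ / 3 : ℝ) ≠ 0 := by positivity
  have hsum : tp + tm = (14 + 4 * Δ) / 3 := by rw [htp, htm]; ring
  have hprod : tp * tm = 8 * (1 + Δ) / 3 := by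
    rw [htp, htm]; linear_combination (-1/9 : ℝ) * hs2
  have hq_p : tp ^ 2 = (14 + 4 * Δ) / 3 * tp - 8 * (1 + Δ) / 3 := by
    rw [htp]; linear_combination (1/9 : ℝ) * hs2
  have hq_m : tm ^ 2 = (14 + 4 * Δ) / 3 * tm - 8 * (1 + Δ) / 3 := by
    rw [htm]; linear_combination (1/9 : ℝ) * hs2
  clear_value tp tm s
  have hC : ∀ k : ℕ, (4:ℝ) ^ (k + 2) * Bseq Δ (k + 2) =
      (14 + 4 * Δ) / 3 * ((4:ℝ) ^ (k + 1) * Bseq Δ (k + 1)) -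
        8 * (1 + Δ) / 3 * ((4:ℝ) ^ k * Bseq Δ k) := by
    intro k
    rw [show k + 2 = (k + 1) + 1 from rfl, Bseq_succ, Aseq_succ]
    ring
  have h0 : (4:ℝ) ^ 0 * Bseq Δ 0 =
      tp ^ (0 + 1) / (tp - tm) - tm ^ (0 + 1) / (tp - tm) -
        tp * tm / (2 * (1 + 2 * Δ / 3)) * ((tp ^ 0 - tm ^ 0) / (tp - tm)) := by
    rw [Bseq_zero]
    field_simp
    ring
  have h1 : (4:ℝ) ^ 1 * Bseq Δ 1 =
      tp ^ (1 + 1) / (tp - tm) - tm ^ (1 + 1) / (tp - tm) -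
        tp * tm / (2 * (1 + 2 * Δ / 3)) * ((tp ^ 1 - tm ^ 1) / (tp - tm)) := by
    have hR1 : tp ^ (1 + 1) / (tp - tm) - tm ^ (1 + 1) / (tp - tm) -
        tp * tm / (2 * (1 + 2 * Δ / 3)) * ((tp ^ 1 - tm ^ 1) / (tp - tm)) =
        (tp + tm) - tp * tm / (2 * (1 + 2 * Δ / 3)) := by
      field_simp
      ring
    have hB1 := Bseq_succ Δ 0
    rw [Aseq_zero, Bseq_zero] at hB1
    norm_num at hB1
    rw [hR1, hsum, hprod, hB1]
    field_simp
    ring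
  have key : ∀ k : ℕ,
      ((4:ℝ) ^ k * Bseq Δ k =
        tp ^ (k + 1) / (tp - tm) - tm ^ (k + 1) / (tp - tm) -
          tp * tm / (2 * (1 + 2 * Δ / 3)) * ((tp ^ k - tm ^ k) / (tp - tm))) ∧
      ((4:ℝ) ^ (k + 1) * Bseq Δ (k + 1) =
        tp ^ (k + 2) / (tp - tm) - tm ^ (k + 2) / (tp - tm) -
          tp * tm / (2 * (1 + 2 * Δ / 3)) * ((tp ^ (k + 1) - tm ^ (k + 1)) / (tp - tm))) := by
    intro k
    induction k with
    | zero => exact ⟨h0, h1⟩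
    | succ k ih =>
      refine ⟨ih.2, ?_⟩
      rw [hC k, ih.1, ih.2]
      linear_combination
        (-(tp ^ (k + 1) - tp * tm / (2 * (1 + 2 * Δ / 3)) * tp ^ k) / (tp - tm)) * hq_p +
        ((tm ^ (k + 1) - tp * tm / (2 * (1 + 2 * Δ / 3)) * tm ^ k) / (tp - tm)) * hq_m
  exact (key n).1
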